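/- Let M be a finite matroid on ground set E with set of bases B, and let μ be a full-support Rayleigh probability measure on B (so M is weakly Rayleigh with witness μ). Let A ⊆ E and distinct elements i, j, k, ℓ ∈ E∖A be such that B1 = A∪{i,k}, B2 = A∪{i,ℓ}, B3 = A∪{j,ℓ}, B4 = A∪{j,k} are all bases of M, and at most one of A∪{i,j} and A∪{k,ℓ} is a basis (a degenerate quadrangle). Then μ(B1)·μ(B3) = μ(B2)·μ(B4). -/

import Mathlib

open Finset

/-- A matroid on a finite ground set `E`, given by its independent sets. -/
structure FinMatroid (E : Type*) [Fintype E] [DecidableEq E] where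
  Indep : Finset E → Prop
  indep_empty : Indep ∅
  indep_subset : ∀ ⦃S T : Finset E⦄, Indep T → S ⊆ T → Indep S
  indep_exchange : ∀ ⦃S T : Finset E⦄, Indep S → Indep T → S.card < T.card →
    ∃ e ∈ T \ S, Indep (insert e S)

/-- A base of the matroid: a maximal independent set. -/
def FinMatroid.IsBase {E : Type*} [Fintype E] [DecidableEq E]
    (M : FinMatroid E) (B : Finset E) : Prop :=
  M.Indep B ∧ ∀ e ∉ B, ¬ M.Indep (insert e B)

/-- Probability of the event `P` under the tilt of the measure `μ` by the weight vector `w`: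
`μ_w(A) ∝ μ(A) · ∏_{e∈A} w_e`. -/
noncomputable def tiltProb {E : Type*} [Fintype E] [DecidableEq E]
    (μ : Finset E → ℝ) (w : E → ℝ) (P : Finset E → Prop) [DecidablePred P] : ℝ :=
  (∑ A ∈ univ.filter P, μ A * ∏ e ∈ A, w e) / (∑ A : Finset E, μ A * ∏ e ∈ A, w e)

/-- `μ` is Rayleigh: every positive tilt of `μ` satisfies the Rayleigh inequality
`P[T ⊆ B] · P[e ∈ B] ≥ P[T ∪ {e} ⊆ B]`. -/
def IsRayleigh {E : Type*} [Fintype E] [DecidableEq E] (μ : Finset E → ℝ) : Prop :=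
  ∀ w : E → ℝ, (∀ e, 0 < w e) → ∀ e : E, ∀ T : Finset E, e ∉ T →
    tiltProb μ w (fun A => insert e T ⊆ A) ≤
      tiltProb μ w (fun A => T ⊆ A) * tiltProb μ w (fun A => e ∈ A)

lemma base_eq_of_subset {E : Type*} [Fintype E] [DecidableEq E] (M : FinMatroid E)
    {B C : Finset E} (hB : M.IsBase B) (hC : M.Indep C) (hBC : B ⊆ C) : C = B := by
  by_contra h
  obtain ⟨e, heC, heB⟩ :=
    Finset.exists_of_ssubset (Finset.ssubset_iff_subset_ne.mpr ⟨hBC, fun h' => h h'.symm⟩)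
  exact hB.2 e heB (M.indep_subset hC (Finset.insert_subset heC hBC))

lemma base_card_eq {E : Type*} [Fintype E] [DecidableEq E] (M : FinMatroid E)
    {B C : Finset E} (hB : M.IsBase B) (hC : M.IsBase C) : B.card = C.card := by
  rcases lt_trichotomy B.card C.card with h | h | h
  · obtain ⟨e, he, hind⟩ := M.indep_exchange hB.1 hC.1 h
    exact absurd hind (hB.2 e (Finset.mem_sdiff.mp he).2)
  · exact h
  · obtain ⟨e, he, hind⟩ := M.indep_exchange hC.1 hB.1 h
    exact absurd hind (hC.2 e (Finset.mem_sdiff.mp he).2)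

set_option maxHeartbeats 4000000 in
lemma key_ineq {E : Type*} [Fintype E] [DecidableEq E] (M : FinMatroid E)
    (μ : Finset E → ℝ)
    (h0 : ∀ B, 0 ≤ μ B)
    (hsupp : ∀ B : Finset E, μ B ≠ 0 ↔ M.IsBase B)
    (hsum : (∑ B : Finset E, μ B) = 1)
    (hray : IsRayleigh μ)
    (A : Finset E) (i j k l : E)
    (hij : i ≠ j) (hik : i ≠ k) (hil : i ≠ l)
    (hjk : j ≠ k) (hjl : j ≠ l) (hkl : k ≠ l)
    (hiA : i ∉ A) (hjA : j ∉ A) (hkA : k ∉ A) (hlA : l ∉ A)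
    (hB1 : M.IsBase (insert i (insert k A)))
    (ε α β : ℝ) (hε0 : 0 < ε) (hε1 : ε ≤ 1)
    (hα0 : 0 < α) (hα1 : α ≤ 1) (hβ0 : 0 < β) (hβ1 : β ≤ 1)
    (hαβ : α * β = ε)
    (hijz : α ≤ ε ∨ μ (insert i (insert j A)) = 0)
    (hklz : β ≤ ε ∨ μ (insert k (insert l A)) = 0) :
    μ (insert i (insert k A)) *
        (μ (insert i (insert k A)) + μ (insert i (insert l A)) +
          μ (insert j (insert l A)) + μ (insert j (insert k A))) ≤
      (μ (insert i (insert k A)) + μ (insert j (insert k A)) + ε) *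
        (μ (insert i (insert k A)) + μ (insert i (insert l A)) + ε) ∧
    μ (insert i (insert l A)) *
        (μ (insert i (insert k A)) + μ (insert i (insert l A)) +
          μ (insert j (insert l A)) + μ (insert j (insert k A))) ≤
      (μ (insert i (insert l A)) + μ (insert j (insert l A)) + ε) *
        (μ (insert i (insert k A)) + μ (insert i (insert l A)) + ε) := by
  classical
  set t : ℝ := ε⁻¹ * ε⁻¹ with ht
  have ht0 : 0 < t := by positivity
  have hεinv : 1 ≤ ε⁻¹ := one_le_inv_iff₀.mpr ⟨hε0, hε1⟩
  have ht1 : 1 ≤ t := by nlinarith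
  have htε : t * (ε * ε) = 1 := by rw [ht, ← mul_inv, inv_mul_cancel₀ (by positivity)]
  set w : E → ℝ := fun e =>
    if e ∈ A then t else if e = i ∨ e = j then α else if e = k ∨ e = l then β else ε * ε
    with hw
  have hw_pos : ∀ e, 0 < w e := by
    intro e; simp only [hw]; split_ifs <;> positivity
  have hwA : ∀ e ∈ A, w e = t := by intro e he; simp [hw, he]
  have hwi : w i = α := by simp [hw, hiA]
  have hwj : w j = α := by simp [hw, hjA]
  have hwk : w k = β := by simp [hw, hkA, hik.symm, hjk.symm]
  have hwl : w l = β := by simp [hw, hlA, hil.symm, hjl.symm]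
  have hwout : ∀ e, e ∉ A → e ≠ i → e ≠ j → e ≠ k → e ≠ l → w e = ε * ε := by
    intro e h1 h2 h3 h4 h5; simp [hw, h1, h2, h3, h4, h5]
  have hwle1 : ∀ e, e ∉ A → w e ≤ 1 := by
    intro e he; simp only [hw, if_neg he]
    split_ifs
    · exact hα1
    · exact hβ1
    · nlinarith [hε0, hε1]
  have hprodA : ∏ e ∈ A, w e = t ^ A.card := by
    rw [Finset.prod_congr rfl hwA, Finset.prod_const]
  set Q : ℝ := t ^ A.card * ε with hQ
  have hQ0 : 0 < Q := by positivity
  have hp1 : ∏ e ∈ insert i (insert k A), w e = Q := by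
    rw [Finset.prod_insert (by simp [hik, hiA]), Finset.prod_insert hkA, hprodA,
      hwi, hwk, hQ, ← hαβ]; ring
  have hp2 : ∏ e ∈ insert i (insert l A), w e = Q := by
    rw [Finset.prod_insert (by simp [hil, hiA]), Finset.prod_insert hlA, hprodA,
      hwi, hwl, hQ, ← hαβ]; ring
  have hp3 : ∏ e ∈ insert j (insert l A), w e = Q := by
    rw [Finset.prod_insert (by simp [hjl, hjA]), Finset.prod_insert hlA, hprodA,
      hwj, hwl, hQ, ← hαβ]; ring
  have hp4 : ∏ e ∈ insert j (insert k A), w e = Q := by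
    rw [Finset.prod_insert (by simp [hjk, hjA]), Finset.prod_insert hkA, hprodA,
      hwj, hwk, hQ, ← hαβ]; ring
  set S4 : Finset (Finset E) :=
    {insert i (insert k A), insert i (insert l A), insert j (insert l A),
      insert j (insert k A)} with hS4
  have hQS4 : ∀ B ∈ S4, ∏ e ∈ B, w e = Q := by
    intro B hB
    simp only [hS4, mem_insert, mem_singleton] at hB
    rcases hB with rfl | rfl | rfl | rfl
    exacts [hp1, hp2, hp3, hp4]
  -- the crucial bound for all other bases
  have hbound : ∀ B : Finset E, μ B ≠ 0 → B ∉ S4 → ∏ e ∈ B, w e ≤ Q * ε := by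
    intro B hμB hBS4
    have hBbase : M.IsBase B := (hsupp B).mp hμB
    simp only [hS4, mem_insert, mem_singleton, not_or] at hBS4
    obtain ⟨hne1, hne2, hne3, hne4⟩ := hBS4
    by_cases hAB : A ⊆ B
    · have hcard1 : (insert i (insert k A)).card = A.card + 2 := by
        rw [card_insert_of_notMem (by simp [hik, hiA]), card_insert_of_notMem hkA]
      have hcardB : B.card = A.card + 2 := (base_card_eq M hBbase hB1).trans hcard1
      have hsd : (B \ A).card = 2 := by rw [card_sdiff_of_subset hAB]; omega
      obtain ⟨x, y, hxy, hxyset⟩ := Finset.card_eq_two.mp hsd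
      have hx : x ∈ B ∧ x ∉ A := mem_sdiff.mp (hxyset ▸ (by simp : x ∈ ({x, y} : Finset E)))
      have hy : y ∈ B ∧ y ∉ A := mem_sdiff.mp (hxyset ▸ (by simp : y ∈ ({x, y} : Finset E)))
      have hBeq : B = insert x (insert y A) := by
        ext e
        simp only [Finset.mem_insert]
        constructor
        · intro he
          by_cases heA : e ∈ A
          · tauto
          · have : e ∈ B \ A := mem_sdiff.mpr ⟨he, heA⟩
            rw [hxyset] at this
            simp only [mem_insert, mem_singleton] at this
            tauto
        · rintro (rfl | rfl | heA)
          · exact hx.1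
          · exact hy.1
          · exact hAB heA
      have hprodB : ∏ e ∈ B, w e = w x * w y * t ^ A.card := by
        rw [hBeq, Finset.prod_insert (by simp [hxy, hx.2]), Finset.prod_insert hy.2,
          hprodA]; ring
      have hQε : Q * ε = ε * ε * t ^ A.card := by rw [hQ]; ring
      suffices hxyw : w x * w y ≤ ε * ε by
        rw [hprodB, hQε]
        exact mul_le_mul_of_nonneg_right hxyw (pow_pos ht0 A.card).le
      have hclass : ∀ z, z ∈ B → z ∉ A →
          (w z = α ∧ (z = i ∨ z = j)) ∨ (w z = β ∧ (z = k ∨ z = l)) ∨ w z = ε * ε := by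
        intro z _ hzA
        by_cases h1 : z = i ∨ z = j
        · exact Or.inl ⟨by rcases h1 with rfl | rfl; exacts [hwi, hwj], h1⟩
        · by_cases h2 : z = k ∨ z = l
          · exact Or.inr (Or.inl ⟨by rcases h2 with rfl | rfl; exacts [hwk, hwl], h2⟩)
          · push_neg at h1 h2
            exact Or.inr (Or.inr (hwout z hzA h1.1 h1.2 h2.1 h2.2))
      rcases hclass x hx.1 hx.2 with ⟨hwx, hxc⟩ | ⟨hwx, hxc⟩ | hwx
      · rcases hclass y hy.1 hy.2 with ⟨hwy, hyc⟩ | ⟨hwy, hyc⟩ | hwy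
        · -- {x,y} = {i,j}
          have hBij : B = insert i (insert j A) := by
            rcases hxc with rfl | rfl <;> rcases hyc with rfl | rfl
            · exact absurd rfl hxy
            · exact hBeq
            · rw [hBeq, Finset.insert_comm]
            · exact absurd rfl hxy
          have hαε : α ≤ ε := hijz.resolve_right (by rw [← hBij]; exact hμB)
          rw [hwx, hwy]; exact mul_le_mul hαε hαε hα0.le hε0.le
        · exfalso
          rcases hxc with rfl | rfl <;> rcases hyc with rfl | rfl
          · exact hne1 hBeq
          · exact hne2 hBeq
          · exact hne4 hBeq
          · exact hne3 hBeq
        · rw [hwx, hwy]; exact mul_le_of_le_one_left (by positivity) hα1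
      · rcases hclass y hy.1 hy.2 with ⟨hwy, hyc⟩ | ⟨hwy, hyc⟩ | hwy
        · exfalso
          rcases hxc with rfl | rfl <;> rcases hyc with rfl | rfl
          · exact hne1 (hBeq.trans (Finset.insert_comm _ _ _))
          · exact hne4 (hBeq.trans (Finset.insert_comm _ _ _))
          · exact hne2 (hBeq.trans (Finset.insert_comm _ _ _))
          · exact hne3 (hBeq.trans (Finset.insert_comm _ _ _))
        · have hBkl : B = insert k (insert l A) := by
            rcases hxc with rfl | rfl <;> rcases hyc with rfl | rfl
            · exact absurd rfl hxy
            · exact hBeq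
            · rw [hBeq, Finset.insert_comm]
            · exact absurd rfl hxy
          have hβε : β ≤ ε := hklz.resolve_right (by rw [← hBkl]; exact hμB)
          rw [hwx, hwy]; exact mul_le_mul hβε hβε hβ0.le hε0.le
        · rw [hwx, hwy]; exact mul_le_of_le_one_left (by positivity) hβ1
      · have hy1 : w y ≤ 1 := hwle1 y hy.2
        rw [hwx]; exact mul_le_of_le_one_right (by positivity) hy1
    · -- B does not contain all of A
      obtain ⟨a, haA, haB⟩ := Finset.not_subset.mp hAB
      have hsub : B.filter (· ∈ A) ⊆ A.erase a := by
        intro e he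
        simp only [mem_filter] at he
        exact mem_erase.mpr ⟨fun h => haB (h ▸ he.1), he.2⟩
      have hm : (B.filter (· ∈ A)).card ≤ A.card - 1 := by
        have := card_le_card hsub
        rwa [card_erase_of_mem haA] at this
      have hA1 : 1 ≤ A.card := card_pos.mpr ⟨a, haA⟩
      have hsplit : ∏ e ∈ B, w e =
          (∏ e ∈ B.filter (· ∈ A), w e) * ∏ e ∈ B.filter (fun e => ¬ e ∈ A), w e :=
        (Finset.prod_filter_mul_prod_filter_not B (· ∈ A) w).symm
      have h1 : ∏ e ∈ B.filter (· ∈ A), w e = t ^ (B.filter (· ∈ A)).card := by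
        rw [Finset.prod_congr rfl (fun e he => hwA e (mem_filter.mp he).2), Finset.prod_const]
      have h2 : ∏ e ∈ B.filter (fun e => ¬ e ∈ A), w e ≤ 1 :=
        Finset.prod_le_one (fun e _ => (hw_pos e).le)
          (fun e he => hwle1 e (mem_filter.mp he).2)
      have h3 : t ^ (B.filter (· ∈ A)).card ≤ t ^ (A.card - 1) := pow_le_pow_right₀ ht1 hm
      have h4 : t ^ (A.card - 1) = Q * ε := by
        have : t ^ (A.card - 1) * (t * (ε * ε)) = Q * ε := by
          rw [hQ]
          have h5 : t ^ (A.card - 1) * t = t ^ A.card := by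
            rw [← pow_succ, Nat.sub_add_cancel hA1]
          calc t ^ (A.card - 1) * (t * (ε * ε)) = t ^ (A.card - 1) * t * (ε * ε) := by ring
            _ = t ^ A.card * (ε * ε) := by rw [h5]
            _ = t ^ A.card * ε * ε := by ring
        rw [htε, mul_one] at this
        exact this
      have hpos1 : 0 ≤ ∏ e ∈ B.filter (· ∈ A), w e :=
        (Finset.prod_pos (fun e _ => hw_pos e)).le
      calc ∏ e ∈ B, w e
          = (∏ e ∈ B.filter (· ∈ A), w e) * ∏ e ∈ B.filter (fun e => ¬ e ∈ A), w e := hsplit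
        _ ≤ (∏ e ∈ B.filter (· ∈ A), w e) * 1 := by
            apply mul_le_mul_of_nonneg_left h2 hpos1
        _ = t ^ (B.filter (· ∈ A)).card := by rw [mul_one, h1]
        _ ≤ t ^ (A.card - 1) := h3
        _ = Q * ε := h4
  -- sums
  have hterm_nonneg : ∀ B : Finset E, 0 ≤ μ B * ∏ e ∈ B, w e :=
    fun B => mul_nonneg (h0 B) (Finset.prod_pos (fun e _ => hw_pos e)).le
  set Z : ℝ := ∑ B : Finset E, μ B * ∏ e ∈ B, w e with hZdef
  have hlow : ∀ (F : Finset (Finset E)) (B0 : Finset E), B0 ∈ F → B0 ∈ S4 →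
      μ B0 * Q ≤ ∑ B ∈ F, μ B * ∏ e ∈ B, w e := by
    intro F B0 hB0F hB0S4
    have h := Finset.single_le_sum (f := fun B => μ B * ∏ e ∈ B, w e)
      (fun B _ => hterm_nonneg B) hB0F
    calc μ B0 * Q = μ B0 * ∏ e ∈ B0, w e := by rw [hQS4 B0 hB0S4]
      _ ≤ ∑ B ∈ F, μ B * ∏ e ∈ B, w e := h
  have hub : ∀ (F G : Finset (Finset E)), G ⊆ S4 → (∀ B ∈ S4, B ∈ F → B ∈ G) →
      ∑ B ∈ F, μ B * ∏ e ∈ B, w e ≤ (∑ B ∈ G, μ B) * Q + Q * ε := by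
    intro F G hGS4 hFG
    rw [← Finset.sum_filter_add_sum_filter_not F (· ∈ S4)]
    have hpart1 : ∑ B ∈ F.filter (· ∈ S4), μ B * ∏ e ∈ B, w e ≤ (∑ B ∈ G, μ B) * Q := by
      have hsub : F.filter (· ∈ S4) ⊆ G := by
        intro B hB
        simp only [mem_filter] at hB
        exact hFG B hB.2 hB.1
      calc ∑ B ∈ F.filter (· ∈ S4), μ B * ∏ e ∈ B, w e
          = ∑ B ∈ F.filter (· ∈ S4), μ B * Q :=
            Finset.sum_congr rfl (fun B hB => by rw [hQS4 B (mem_filter.mp hB).2])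
        _ ≤ ∑ B ∈ G, μ B * Q :=
            Finset.sum_le_sum_of_subset_of_nonneg hsub
              (fun B _ _ => mul_nonneg (h0 B) hQ0.le)
        _ = (∑ B ∈ G, μ B) * Q := (Finset.sum_mul _ _ _).symm
    have hpart2 : ∑ B ∈ F.filter (fun B => ¬ B ∈ S4), μ B * ∏ e ∈ B, w e ≤ Q * ε := by
      have hterm : ∀ B ∈ F.filter (fun B => ¬ B ∈ S4),
          μ B * ∏ e ∈ B, w e ≤ μ B * (Q * ε) := by
        intro B hB
        by_cases hμB : μ B = 0
        · simp [hμB]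
        · exact mul_le_mul_of_nonneg_left (hbound B hμB (mem_filter.mp hB).2) (h0 B)
      calc ∑ B ∈ F.filter (fun B => ¬ B ∈ S4), μ B * ∏ e ∈ B, w e
          ≤ ∑ B ∈ F.filter (fun B => ¬ B ∈ S4), μ B * (Q * ε) := Finset.sum_le_sum hterm
        _ ≤ ∑ B : Finset E, μ B * (Q * ε) :=
            Finset.sum_le_sum_of_subset_of_nonneg (subset_univ _)
              (fun B _ _ => mul_nonneg (h0 B) (by positivity))
        _ = (∑ B : Finset E, μ B) * (Q * ε) := (Finset.sum_mul _ _ _).symm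
        _ = Q * ε := by rw [hsum, one_mul]
    linarith
  -- distinctness of the four bases
  have hnot : ∀ x u v : E, x ≠ u → x ≠ v → x ∉ A → x ∉ insert u (insert v A) := by
    intro x u v h1 h2 h3; simp [h1, h2, h3]
  have hne12 : insert i (insert k A) ≠ insert i (insert l A) :=
    fun h => hnot k i l hik.symm hkl hkA (h ▸ (by simp : k ∈ insert i (insert k A)))
  have hne13 : insert i (insert k A) ≠ insert j (insert l A) :=
    fun h => hnot i j l hij hil hiA (h ▸ (by simp : i ∈ insert i (insert k A)))
  have hne14 : insert i (insert k A) ≠ insert j (insert k A) :=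
    fun h => hnot i j k hij hik hiA (h ▸ (by simp : i ∈ insert i (insert k A)))
  have hne23 : insert i (insert l A) ≠ insert j (insert l A) :=
    fun h => hnot i j l hij hil hiA (h ▸ (by simp : i ∈ insert i (insert l A)))
  have hne24 : insert i (insert l A) ≠ insert j (insert k A) :=
    fun h => hnot i j k hij hik hiA (h ▸ (by simp : i ∈ insert i (insert l A)))
  have hne34 : insert j (insert l A) ≠ insert j (insert k A) :=
    fun h => hnot l j k hjl.symm hkl.symm hlA (h ▸ (by simp : l ∈ insert j (insert l A)))
  have hσ0 : 0 ≤ μ (insert i (insert k A)) + μ (insert i (insert l A)) +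
      μ (insert j (insert l A)) + μ (insert j (insert k A)) := by
    have := h0 (insert i (insert k A)); have := h0 (insert i (insert l A))
    have := h0 (insert j (insert l A)); have := h0 (insert j (insert k A))
    linarith
  have hZlow : (μ (insert i (insert k A)) + μ (insert i (insert l A)) +
      μ (insert j (insert l A)) + μ (insert j (insert k A))) * Q ≤ Z := by
    have h1 : ∑ B ∈ S4, μ B * ∏ e ∈ B, w e ≤ Z :=
      Finset.sum_le_sum_of_subset_of_nonneg (subset_univ _) (fun B _ _ => hterm_nonneg B)
    have h2 : ∑ B ∈ S4, μ B * ∏ e ∈ B, w e = ∑ B ∈ S4, μ B * Q :=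
      Finset.sum_congr rfl (fun B hB => by rw [hQS4 B hB])
    have h3 : ∑ B ∈ S4, μ B * Q = (μ (insert i (insert k A)) + μ (insert i (insert l A)) +
        μ (insert j (insert l A)) + μ (insert j (insert k A))) * Q := by
      rw [hS4, Finset.sum_insert (by simp [hne12, hne13, hne14]),
        Finset.sum_insert (by simp [hne23, hne24]),
        Finset.sum_insert (by simp [hne34]), Finset.sum_singleton]
      ring
    rw [← h3, ← h2]; exact h1
  have hm1pos : 0 < μ (insert i (insert k A)) :=
    lt_of_le_of_ne (h0 _) (Ne.symm ((hsupp _).mpr hB1))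
  have hB1S4 : insert i (insert k A) ∈ S4 := by simp [hS4]
  have hZpos : 0 < Z := by
    have h := hlow univ (insert i (insert k A)) (mem_univ _) hB1S4
    calc (0:ℝ) < μ (insert i (insert k A)) * Q := by positivity
      _ ≤ Z := h
  have hmulZ : ∀ a b c : ℝ, a / Z ≤ b / Z * (c / Z) → a * Z ≤ b * c := by
    intro a b c h
    rw [div_mul_div_comm, div_le_div_iff₀ hZpos (mul_pos hZpos hZpos)] at h
    have h' : a * Z * Z ≤ b * c * Z := by
      calc a * Z * Z = a * (Z * Z) := by ring
        _ ≤ b * c * Z := h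
    exact le_of_mul_le_mul_right h' hZpos
  -- the two Rayleigh applications
  have hrk :
      (∑ B ∈ univ.filter (fun B => insert i ({k} : Finset E) ⊆ B), μ B * ∏ e ∈ B, w e) / Z ≤
        ((∑ B ∈ univ.filter (fun B => ({k} : Finset E) ⊆ B), μ B * ∏ e ∈ B, w e) / Z) *
          ((∑ B ∈ univ.filter (fun B => i ∈ B), μ B * ∏ e ∈ B, w e) / Z) :=
    hray w hw_pos i {k} (by simp [hik])
  have hrl :
      (∑ B ∈ univ.filter (fun B => insert i ({l} : Finset E) ⊆ B), μ B * ∏ e ∈ B, w e) / Z ≤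
        ((∑ B ∈ univ.filter (fun B => ({l} : Finset E) ⊆ B), μ B * ∏ e ∈ B, w e) / Z) *
          ((∑ B ∈ univ.filter (fun B => i ∈ B), μ B * ∏ e ∈ B, w e) / Z) :=
    hray w hw_pos i {l} (by simp [hil])
  have hNZ1 := hmulZ _ _ _ hrk
  have hNZ2 := hmulZ _ _ _ hrl
  -- lower bounds
  have hN1low : μ (insert i (insert k A)) * Q ≤
      ∑ B ∈ univ.filter (fun B => insert i ({k} : Finset E) ⊆ B), μ B * ∏ e ∈ B, w e :=
    hlow _ _ (mem_filter.mpr ⟨mem_univ _, by simp [Finset.insert_subset_iff]⟩) hB1S4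
  have hN1'low : μ (insert i (insert l A)) * Q ≤
      ∑ B ∈ univ.filter (fun B => insert i ({l} : Finset E) ⊆ B), μ B * ∏ e ∈ B, w e :=
    hlow _ _ (mem_filter.mpr ⟨mem_univ _, by simp [Finset.insert_subset_iff]⟩)
      (by simp [hS4])
  -- upper bounds
  have hNkub : ∑ B ∈ univ.filter (fun B => ({k} : Finset E) ⊆ B), μ B * ∏ e ∈ B, w e ≤
      (μ (insert i (insert k A)) + μ (insert j (insert k A))) * Q + Q * ε := by
    have hcond : ∀ B ∈ S4, B ∈ univ.filter (fun B => ({k} : Finset E) ⊆ B) →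
        B ∈ ({insert i (insert k A), insert j (insert k A)} : Finset (Finset E)) := by
      intro B hBS4 hBF
      have hkB : k ∈ B := by simpa using (mem_filter.mp hBF).2
      simp only [hS4, mem_insert, mem_singleton] at hBS4
      simp only [mem_insert, mem_singleton]
      rcases hBS4 with rfl | rfl | rfl | rfl
      · exact Or.inl rfl
      · exfalso; simp only [mem_insert] at hkB
        rcases hkB with h | h | h
        exacts [hik h.symm, hkl h, hkA h]
      · exfalso; simp only [mem_insert] at hkB
        rcases hkB with h | h | h
        exacts [hjk h.symm, hkl h, hkA h]
      · exact Or.inr rfl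
    have h := hub (univ.filter (fun B => ({k} : Finset E) ⊆ B))
      {insert i (insert k A), insert j (insert k A)}
      (by intro B hB; simp only [mem_insert, mem_singleton] at hB
          simp only [hS4, mem_insert, mem_singleton]; tauto) hcond
    rwa [Finset.sum_pair hne14] at h
  have hNlub : ∑ B ∈ univ.filter (fun B => ({l} : Finset E) ⊆ B), μ B * ∏ e ∈ B, w e ≤
      (μ (insert i (insert l A)) + μ (insert j (insert l A))) * Q + Q * ε := by
    have hcond : ∀ B ∈ S4, B ∈ univ.filter (fun B => ({l} : Finset E) ⊆ B) →
        B ∈ ({insert i (insert l A), insert j (insert l A)} : Finset (Finset E)) := by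
      intro B hBS4 hBF
      have hlB : l ∈ B := by simpa using (mem_filter.mp hBF).2
      simp only [hS4, mem_insert, mem_singleton] at hBS4
      simp only [mem_insert, mem_singleton]
      rcases hBS4 with rfl | rfl | rfl | rfl
      · exfalso; simp only [mem_insert] at hlB
        rcases hlB with h | h | h
        exacts [hil h.symm, hkl h.symm, hlA h]
      · exact Or.inl rfl
      · exact Or.inr rfl
      · exfalso; simp only [mem_insert] at hlB
        rcases hlB with h | h | h
        exacts [hjl h.symm, hkl h.symm, hlA h]
    have h := hub (univ.filter (fun B => ({l} : Finset E) ⊆ B))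
      {insert i (insert l A), insert j (insert l A)}
      (by intro B hB; simp only [mem_insert, mem_singleton] at hB
          simp only [hS4, mem_insert, mem_singleton]; tauto) hcond
    rwa [Finset.sum_pair hne23] at h
  have hNiub : ∑ B ∈ univ.filter (fun B => i ∈ B), μ B * ∏ e ∈ B, w e ≤
      (μ (insert i (insert k A)) + μ (insert i (insert l A))) * Q + Q * ε := by
    have hcond : ∀ B ∈ S4, B ∈ univ.filter (fun B => i ∈ B) →
        B ∈ ({insert i (insert k A), insert i (insert l A)} : Finset (Finset E)) := by
      intro B hBS4 hBF
      have hiB : i ∈ B := by simpa using (mem_filter.mp hBF).2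
      simp only [hS4, mem_insert, mem_singleton] at hBS4
      simp only [mem_insert, mem_singleton]
      rcases hBS4 with rfl | rfl | rfl | rfl
      · exact Or.inl rfl
      · exact Or.inr rfl
      · exfalso; simp only [mem_insert] at hiB
        rcases hiB with h | h | h
        exacts [hij h, hil h, hiA h]
      · exfalso; simp only [mem_insert] at hiB
        rcases hiB with h | h | h
        exacts [hij h, hik h, hiA h]
    have h := hub (univ.filter (fun B => i ∈ B))
      {insert i (insert k A), insert i (insert l A)}
      (by intro B hB; simp only [mem_insert, mem_singleton] at hB
          simp only [hS4, mem_insert, mem_singleton]; tauto) hcond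
    rwa [Finset.sum_pair hne12] at h
  -- nonnegativity of the sums
  have hsum_nonneg : ∀ (F : Finset (Finset E)), 0 ≤ ∑ B ∈ F, μ B * ∏ e ∈ B, w e :=
    fun F => Finset.sum_nonneg (fun B _ => hterm_nonneg B)
  have hub_nonneg1 : 0 ≤ (μ (insert i (insert k A)) + μ (insert i (insert l A))) * Q + Q * ε := by
    have := h0 (insert i (insert k A)); have := h0 (insert i (insert l A))
    have h' : 0 ≤ (μ (insert i (insert k A)) + μ (insert i (insert l A))) * Q :=
      mul_nonneg (by linarith) hQ0.le
    have h'' : 0 ≤ Q * ε := by positivity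
    linarith
  constructor
  · have hchain : μ (insert i (insert k A)) * Q *
        ((μ (insert i (insert k A)) + μ (insert i (insert l A)) +
          μ (insert j (insert l A)) + μ (insert j (insert k A))) * Q) ≤
        ((μ (insert i (insert k A)) + μ (insert j (insert k A))) * Q + Q * ε) *
          ((μ (insert i (insert k A)) + μ (insert i (insert l A))) * Q + Q * ε) := by
      calc μ (insert i (insert k A)) * Q *
            ((μ (insert i (insert k A)) + μ (insert i (insert l A)) +
              μ (insert j (insert l A)) + μ (insert j (insert k A))) * Q)
          ≤ (∑ B ∈ univ.filter (fun B => insert i ({k} : Finset E) ⊆ B),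
              μ B * ∏ e ∈ B, w e) * Z :=
            mul_le_mul hN1low hZlow (mul_nonneg hσ0 hQ0.le) (hsum_nonneg _)
        _ ≤ (∑ B ∈ univ.filter (fun B => ({k} : Finset E) ⊆ B), μ B * ∏ e ∈ B, w e) *
              (∑ B ∈ univ.filter (fun B => i ∈ B), μ B * ∏ e ∈ B, w e) := hNZ1
        _ ≤ ((μ (insert i (insert k A)) + μ (insert j (insert k A))) * Q + Q * ε) *
              ((μ (insert i (insert k A)) + μ (insert i (insert l A))) * Q + Q * ε) :=
            mul_le_mul hNkub hNiub (hsum_nonneg _) (by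
              have := h0 (insert i (insert k A)); have := h0 (insert j (insert k A))
              have h' : 0 ≤ (μ (insert i (insert k A)) + μ (insert j (insert k A))) * Q :=
                mul_nonneg (by linarith) hQ0.le
              have h'' : 0 ≤ Q * ε := by positivity
              linarith)
    have h' : (μ (insert i (insert k A)) *
        (μ (insert i (insert k A)) + μ (insert i (insert l A)) +
          μ (insert j (insert l A)) + μ (insert j (insert k A)))) * (Q * Q) ≤
        ((μ (insert i (insert k A)) + μ (insert j (insert k A)) + ε) *
          (μ (insert i (insert k A)) + μ (insert i (insert l A)) + ε)) * (Q * Q) := by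
      calc (μ (insert i (insert k A)) *
            (μ (insert i (insert k A)) + μ (insert i (insert l A)) +
              μ (insert j (insert l A)) + μ (insert j (insert k A)))) * (Q * Q)
          = μ (insert i (insert k A)) * Q *
            ((μ (insert i (insert k A)) + μ (insert i (insert l A)) +
              μ (insert j (insert l A)) + μ (insert j (insert k A))) * Q) := by ring
        _ ≤ ((μ (insert i (insert k A)) + μ (insert j (insert k A))) * Q + Q * ε) *
              ((μ (insert i (insert k A)) + μ (insert i (insert l A))) * Q + Q * ε) := hchain
        _ = ((μ (insert i (insert k A)) + μ (insert j (insert k A)) + ε) *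
              (μ (insert i (insert k A)) + μ (insert i (insert l A)) + ε)) * (Q * Q) := by ring
    exact le_of_mul_le_mul_right h' (by positivity)
  · have hchain : μ (insert i (insert l A)) * Q *
        ((μ (insert i (insert k A)) + μ (insert i (insert l A)) +
          μ (insert j (insert l A)) + μ (insert j (insert k A))) * Q) ≤
        ((μ (insert i (insert l A)) + μ (insert j (insert l A))) * Q + Q * ε) *
          ((μ (insert i (insert k A)) + μ (insert i (insert l A))) * Q + Q * ε) := by
      calc μ (insert i (insert l A)) * Q *
            ((μ (insert i (insert k A)) + μ (insert i (insert l A)) +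
              μ (insert j (insert l A)) + μ (insert j (insert k A))) * Q)
          ≤ (∑ B ∈ univ.filter (fun B => insert i ({l} : Finset E) ⊆ B),
              μ B * ∏ e ∈ B, w e) * Z :=
            mul_le_mul hN1'low hZlow (mul_nonneg hσ0 hQ0.le) (hsum_nonneg _)
        _ ≤ (∑ B ∈ univ.filter (fun B => ({l} : Finset E) ⊆ B), μ B * ∏ e ∈ B, w e) *
              (∑ B ∈ univ.filter (fun B => i ∈ B), μ B * ∏ e ∈ B, w e) := hNZ2
        _ ≤ ((μ (insert i (insert l A)) + μ (insert j (insert l A))) * Q + Q * ε) *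
              ((μ (insert i (insert k A)) + μ (insert i (insert l A))) * Q + Q * ε) :=
            mul_le_mul hNlub hNiub (hsum_nonneg _) (by
              have := h0 (insert i (insert l A)); have := h0 (insert j (insert l A))
              have h' : 0 ≤ (μ (insert i (insert l A)) + μ (insert j (insert l A))) * Q :=
                mul_nonneg (by linarith) hQ0.le
              have h'' : 0 ≤ Q * ε := by positivity
              linarith)
    have h' : (μ (insert i (insert l A)) *
        (μ (insert i (insert k A)) + μ (insert i (insert l A)) +
          μ (insert j (insert l A)) + μ (insert j (insert k A)))) * (Q * Q) ≤
        ((μ (insert i (insert l A)) + μ (insert j (insert l A)) + ε) *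
          (μ (insert i (insert k A)) + μ (insert i (insert l A)) + ε)) * (Q * Q) := by
      calc (μ (insert i (insert l A)) *
            (μ (insert i (insert k A)) + μ (insert i (insert l A)) +
              μ (insert j (insert l A)) + μ (insert j (insert k A)))) * (Q * Q)
          = μ (insert i (insert l A)) * Q *
            ((μ (insert i (insert k A)) + μ (insert i (insert l A)) +
              μ (insert j (insert l A)) + μ (insert j (insert k A))) * Q) := by ring
        _ ≤ ((μ (insert i (insert l A)) + μ (insert j (insert l A))) * Q + Q * ε) *
              ((μ (insert i (insert k A)) + μ (insert i (insert l A))) * Q + Q * ε) := hchain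
        _ = ((μ (insert i (insert l A)) + μ (insert j (insert l A)) + ε) *
              (μ (insert i (insert k A)) + μ (insert i (insert l A)) + ε)) * (Q * Q) := by ring
    exact le_of_mul_le_mul_right h' (by positivity)



theorem stmt_17 {E : Type*} [Fintype E] [DecidableEq E] (M : FinMatroid E)
    -- μ is a full-support Rayleigh probability measure on the bases of M
    (μ : Finset E → ℝ)
    (h0 : ∀ B, 0 ≤ μ B)
    (hsupp : ∀ B : Finset E, μ B ≠ 0 ↔ M.IsBase B)
    (hsum : (∑ B : Finset E, μ B) = 1)
    (hray : IsRayleigh μ)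
    -- a degenerate quadrangle of bases
    (A : Finset E) (i j k l : E)
    (hij : i ≠ j) (hik : i ≠ k) (hil : i ≠ l)
    (hjk : j ≠ k) (hjl : j ≠ l) (hkl : k ≠ l)
    (hiA : i ∉ A) (hjA : j ∉ A) (hkA : k ∉ A) (hlA : l ∉ A)
    (hB1 : M.IsBase (insert i (insert k A)))
    (hB2 : M.IsBase (insert i (insert l A)))
    (hB3 : M.IsBase (insert j (insert l A)))
    (hB4 : M.IsBase (insert j (insert k A)))
    (hdeg : ¬ (M.IsBase (insert i (insert j A)) ∧ M.IsBase (insert k (insert l A)))) :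
    μ (insert i (insert k A)) * μ (insert j (insert l A)) =
      μ (insert i (insert l A)) * μ (insert j (insert k A)) := by
  have hz : μ (insert i (insert j A)) = 0 ∨ μ (insert k (insert l A)) = 0 := by
    by_contra h
    push_neg at h
    exact hdeg ⟨(hsupp _).mp h.1, (hsupp _).mp h.2⟩
  have hkey : ∀ ε : ℝ, 0 < ε → ε ≤ 1 →
      (μ (insert i (insert k A)) *
        (μ (insert i (insert k A)) + μ (insert i (insert l A)) +
          μ (insert j (insert l A)) + μ (insert j (insert k A))) ≤
      (μ (insert i (insert k A)) + μ (insert j (insert k A)) + ε) *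
        (μ (insert i (insert k A)) + μ (insert i (insert l A)) + ε) ∧
      μ (insert i (insert l A)) *
        (μ (insert i (insert k A)) + μ (insert i (insert l A)) +
          μ (insert j (insert l A)) + μ (insert j (insert k A))) ≤
      (μ (insert i (insert l A)) + μ (insert j (insert l A)) + ε) *
        (μ (insert i (insert k A)) + μ (insert i (insert l A)) + ε)) := by
    intro ε hε0 hε1
    rcases hz with hz | hz
    · exact key_ineq M μ h0 hsupp hsum hray A i j k l hij hik hil hjk hjl hkl
        hiA hjA hkA hlA hB1 ε 1 ε hε0 hε1 one_pos le_rfl hε0 hε1 (one_mul ε)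
        (Or.inr hz) (Or.inl le_rfl)
    · exact key_ineq M μ h0 hsupp hsum hray A i j k l hij hik hil hjk hjl hkl
        hiA hjA hkA hlA hB1 ε ε 1 hε0 hε1 hε0 hε1 one_pos le_rfl (mul_one ε)
        (Or.inl le_rfl) (Or.inr hz)
  have hle1 : ∀ B : Finset E, μ B ≤ 1 := by
    intro B
    have h := Finset.single_le_sum (f := μ) (fun B _ => h0 B) (mem_univ B)
    rwa [hsum] at h
  have h13 : μ (insert i (insert k A)) * μ (insert j (insert l A)) ≤
      μ (insert i (insert l A)) * μ (insert j (insert k A)) := by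
    apply le_of_forall_pos_le_add
    intro δ hδ
    obtain ⟨h1, _⟩ := hkey (min (δ/5) 1) (by positivity) (min_le_right _ _)
    have hε5 : min (δ/5) 1 ≤ δ/5 := min_le_left _ _
    have hε1' : min (δ/5) 1 ≤ 1 := min_le_right _ _
    have hε0' : 0 < min (δ/5) 1 := by positivity
    nlinarith [h0 (insert i (insert k A)), h0 (insert i (insert l A)),
      h0 (insert j (insert l A)), h0 (insert j (insert k A)),
      hle1 (insert i (insert k A)), hle1 (insert i (insert l A)),
      hle1 (insert j (insert l A)), hle1 (insert j (insert k A))]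
  have h24 : μ (insert i (insert l A)) * μ (insert j (insert k A)) ≤
      μ (insert i (insert k A)) * μ (insert j (insert l A)) := by
    apply le_of_forall_pos_le_add
    intro δ hδ
    obtain ⟨_, h2⟩ := hkey (min (δ/5) 1) (by positivity) (min_le_right _ _)
    have hε5 : min (δ/5) 1 ≤ δ/5 := min_le_left _ _
    have hε1' : min (δ/5) 1 ≤ 1 := min_le_right _ _
    have hε0' : 0 < min (δ/5) 1 := by positivity
    nlinarith [h0 (insert i (insert k A)), h0 (insert i (insert l A)),
      h0 (insert j (insert l A)), h0 (insert j (insert k A)),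
      hle1 (insert i (insert k A)), hle1 (insert i (insert l A)),
      hle1 (insert j (insert l A)), hle1 (insert j (insert k A))]
  linarith
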